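/- Let q ≥ 2 and r₁, r₂ > 0, and let z : [0,1] → ℝ be twice continuously differentiable with z(0) = 0 and z'(x) ≠ 0 for all x ∈ [0,1]. If ∫₀¹ 1/|z'(x)|^q dx ≤ r₁ and (∫₀¹ (z(x)² + z'(x)² + z''(x)²) dx)^{1/2} ≤ r₂, then there exists a constant c > 0 depending only on q, r₁ and r₂ (and not on z) such that |z'(x)| ≥ c for every x ∈ [0,1]. -/

import Mathlib

open Set MeasureTheory intervalIntegral

lemma holder_aux (z : ℝ → ℝ) (hz : ContDiff ℝ 2 z) (K : ℝ) (hK : 0 < K)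
    (hI : (∫ s in (0:ℝ)..1, (deriv (deriv z) s)^2) ≤ K^2)
    {y x : ℝ} (hy : 0 ≤ y) (hx : x ≤ 1) (hyx : y ≤ x) :
    |deriv z x - deriv z y| ≤ K * Real.sqrt (x - y) := by
  have hz1 : ContDiff ℝ 1 (deriv z) :=
    (contDiff_succ_iff_deriv.mp (show ContDiff ℝ (1+1) z by exact_mod_cast hz)).2.2
  have hdiff' : Differentiable ℝ (deriv z) := hz1.differentiable one_ne_zero
  have hcont'' : Continuous (deriv (deriv z)) := hz1.continuous_deriv le_rfl
  rcases eq_or_lt_of_le hyx with rfl | hlt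
  · simp [Real.sqrt_nonneg, mul_nonneg hK.le]
  have hd : 0 < x - y := by linarith
  have hsd : 0 < Real.sqrt (x - y) := Real.sqrt_pos.mpr hd
  set ε : ℝ := K / Real.sqrt (x - y) with hε
  have hε0 : 0 < ε := div_pos hK hsd
  have hftc : (∫ s in y..x, deriv (deriv z) s) = deriv z x - deriv z y :=
    intervalIntegral.integral_deriv_eq_sub (fun t _ => hdiff' t)
      (hcont''.intervalIntegrable _ _)
  have hsub : (∫ s in y..x, (deriv (deriv z) s)^2) ≤ K^2 := by
    refine le_trans (intervalIntegral.integral_mono_interval hy hyx hx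
      (Filter.Eventually.of_forall fun s => sq_nonneg _)
      (((hcont''.pow 2).intervalIntegrable _ _))) hI
  have key : |deriv z x - deriv z y| ≤ (ε * (x - y) + K^2 / ε) / 2 := by
    calc |deriv z x - deriv z y| = |∫ s in y..x, deriv (deriv z) s| := by rw [hftc]
      _ ≤ ∫ s in y..x, |deriv (deriv z) s| :=
          intervalIntegral.abs_integral_le_integral_abs hyx
      _ ≤ ∫ s in y..x, (ε/2 + (deriv (deriv z) s)^2 * (1/(2*ε))) := by
          refine intervalIntegral.integral_mono_on hyx
            (hcont''.abs.intervalIntegrable _ _)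
            ((_root_.intervalIntegrable_const).add
              (((hcont''.pow 2).mul continuous_const).intervalIntegrable _ _)) fun s _ => ?_
          have h1 : (deriv (deriv z) s)^2 = |deriv (deriv z) s|^2 := (sq_abs _).symm
          rw [h1, show ε/2 + |deriv (deriv z) s|^2 * (1/(2*ε)) =
            (ε^2 + |deriv (deriv z) s|^2)/(2*ε) by field_simp,
            le_div_iff₀ (by positivity)]
          nlinarith [sq_nonneg (|deriv (deriv z) s| - ε)]
      _ = ε/2 * (x - y) + (∫ s in y..x, (deriv (deriv z) s)^2) * (1/(2*ε)) := by
          rw [intervalIntegral.integral_add (_root_.intervalIntegrable_const)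
            (show IntervalIntegrable (fun s => (deriv (deriv z) s)^2 * (1/(2*ε))) volume y x from
              ((hcont''.pow 2).mul continuous_const).intervalIntegrable _ _),
            intervalIntegral.integral_const, intervalIntegral.integral_mul_const]
          simp [smul_eq_mul]; ring
      _ ≤ ε/2 * (x - y) + K^2 * (1/(2*ε)) := by
          have := mul_le_mul_of_nonneg_right hsub (by positivity : (0:ℝ) ≤ 1/(2*ε))
          linarith
      _ = (ε * (x - y) + K^2 / ε) / 2 := by field_simp
  have hval : (ε * (x - y) + K^2 / ε) / 2 = K * Real.sqrt (x - y) := by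
    have hs2 : Real.sqrt (x - y) ^ 2 = x - y := Real.sq_sqrt hd.le
    rw [hε]
    field_simp
    nlinarith [hs2]
  linarith [key, hval.le, hval.ge]

lemma integral_inv_left (x₀ a T A : ℝ) (hA : 0 < A) (ha : 0 < a) (haT : a ≤ T) :
    ∫ x in (x₀+a)..(x₀+T), 1/(A*(x-x₀)) = (Real.log T - Real.log a)/A := by
  have huv : x₀ + a ≤ x₀ + T := by linarith
  have hderiv : ∀ x ∈ uIcc (x₀+a) (x₀+T),
      HasDerivAt (fun x => Real.log (x - x₀) / A) (1/(A*(x-x₀))) x := by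
    intro x hx
    rw [uIcc_of_le huv] at hx
    have hxp : 0 < x - x₀ := by have := hx.1; linarith
    have h1 : HasDerivAt (fun x : ℝ => x - x₀) 1 x := (hasDerivAt_id x).sub_const x₀
    have h2 := ((Real.hasDerivAt_log hxp.ne').comp x h1).div_const A
    refine h2.congr_deriv ?_
    rw [one_div, mul_inv]; ring
  have hint : IntervalIntegrable (fun x => 1/(A*(x-x₀))) volume (x₀+a) (x₀+T) := by
    apply ContinuousOn.intervalIntegrable
    apply continuousOn_const.div
    · exact continuousOn_const.mul ((continuousOn_id).sub continuousOn_const)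
    · intro x hx
      rw [uIcc_of_le huv] at hx
      have hxp : 0 < x - x₀ := by have := hx.1; linarith
      positivity
  rw [intervalIntegral.integral_eq_sub_of_hasDerivAt hderiv hint]
  rw [add_sub_cancel_left, add_sub_cancel_left]
  ring

lemma integral_inv_right (x₀ a T A : ℝ) (hA : 0 < A) (ha : 0 < a) (haT : a ≤ T) :
    ∫ x in (x₀-T)..(x₀-a), 1/(A*(x₀-x)) = (Real.log T - Real.log a)/A := by
  have huv : x₀ - T ≤ x₀ - a := by linarith
  have hderiv : ∀ x ∈ uIcc (x₀-T) (x₀-a),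
      HasDerivAt (fun x => -(Real.log (x₀ - x)) / A) (1/(A*(x₀-x))) x := by
    intro x hx
    rw [uIcc_of_le huv] at hx
    have hxp : 0 < x₀ - x := by have := hx.2; linarith
    have h1 : HasDerivAt (fun x : ℝ => x₀ - x) (-1) x := (hasDerivAt_id x).const_sub x₀
    have h2 := (((Real.hasDerivAt_log hxp.ne').comp x h1).neg).div_const A
    refine h2.congr_deriv ?_
    rw [one_div, mul_inv]; ring
  have hint : IntervalIntegrable (fun x => 1/(A*(x₀-x))) volume (x₀-T) (x₀-a) := by
    apply ContinuousOn.intervalIntegrable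
    apply continuousOn_const.div
    · exact continuousOn_const.mul (continuousOn_const.sub continuousOn_id)
    · intro x hx
      rw [uIcc_of_le huv] at hx
      have hxp : 0 < x₀ - x := by have := hx.2; linarith
      positivity
  rw [intervalIntegral.integral_eq_sub_of_hasDerivAt hderiv hint]
  rw [sub_sub_cancel, sub_sub_cancel]
  ring

set_option maxHeartbeats 1000000 in
/-- Generalization of the key lower-bound lemma (Remark 3.1): for q ≥ 2, a
bound on ∫₀¹ 1/|z'|^q together with a W^{2,2}(0,1)-norm bound on z with
z(0) = 0 yields a uniform positive lower bound for |z'| on [0,1]. -/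
theorem strain_lower_bound_general (q r₁ r₂ : ℝ) (hq : 2 ≤ q) (hr₁ : 0 < r₁) (hr₂ : 0 < r₂) :
    ∃ c > 0, ∀ z : ℝ → ℝ, ContDiff ℝ 2 z → z 0 = 0 →
      (∀ x ∈ Icc (0:ℝ) 1, deriv z x ≠ 0) →
      (∫ x in (0:ℝ)..1, 1 / |deriv z x| ^ q) ≤ r₁ →
      (∫ x in (0:ℝ)..1, ((z x)^2 + (deriv z x)^2 + (deriv (deriv z) x)^2)) ^ ((1:ℝ)/2) ≤ r₂ →
      ∀ x ∈ Icc (0:ℝ) 1, c ≤ |deriv z x| := by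
  set T : ℝ := min (1/2) (1/(4*r₂^2)) with hTdef
  have hT0 : 0 < T := lt_min (by norm_num) (by positivity)
  have hT2 : T ≤ 1/2 := min_le_left _ _
  have hT4 : T ≤ 1/(4*r₂^2) := min_le_right _ _
  have hsT : 0 < Real.sqrt T := Real.sqrt_pos.mpr hT0
  set c : ℝ := r₂ * Real.sqrt T * Real.exp (-(2*r₁*r₂^2 + 1)) with hcdef
  have hc0 : 0 < c := by positivity
  refine ⟨c, hc0, ?_⟩
  intro z hz hz0 hz' hI hW x₀ hx₀
  by_contra hcon
  push_neg at hcon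
  set m := |deriv z x₀| with hmdef
  have hm0 : 0 < m := abs_pos.mpr (hz' x₀ hx₀)
  -- continuity facts
  have hz1 : ContDiff ℝ 1 (deriv z) :=
    (contDiff_succ_iff_deriv.mp (show ContDiff ℝ (1+1) z by exact_mod_cast hz)).2.2
  have hzc : Continuous z := hz.continuous
  have hz'c : Continuous (deriv z) := hz1.continuous
  have hz''c : Continuous (deriv (deriv z)) := hz1.continuous_deriv le_rfl
  -- W^{2,2} bound gives bound on ∫ z''²
  have hWsq : (∫ x in (0:ℝ)..1, (deriv (deriv z) x)^2) ≤ r₂^2 := by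
    set S := ∫ x in (0:ℝ)..1, ((z x)^2 + (deriv z x)^2 + (deriv (deriv z) x)^2) with hS
    have hS0 : 0 ≤ S :=
      intervalIntegral.integral_nonneg (by norm_num) (fun s _ => by positivity)
    rw [← Real.sqrt_eq_rpow] at hW
    have hSr : S ≤ r₂^2 := by nlinarith [Real.sq_sqrt hS0, Real.sqrt_nonneg S]
    have hint1 : IntervalIntegrable (fun x => (z x)^2 + (deriv z x)^2) volume 0 1 :=
      (((hzc.pow 2).add (hz'c.pow 2))).intervalIntegrable _ _
    have hint2 : IntervalIntegrable (fun x => (deriv (deriv z) x)^2) volume 0 1 :=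
      ((hz''c.pow 2)).intervalIntegrable _ _
    have hsplit : S = (∫ x in (0:ℝ)..1, ((z x)^2 + (deriv z x)^2))
        + ∫ x in (0:ℝ)..1, (deriv (deriv z) x)^2 := by
      rw [hS, ← intervalIntegral.integral_add hint1 hint2]
    have hpos : 0 ≤ ∫ x in (0:ℝ)..1, ((z x)^2 + (deriv z x)^2) :=
      intervalIntegral.integral_nonneg (by norm_num) (fun s _ => by positivity)
    linarith
  -- Hölder estimate
  have hHol : ∀ x ∈ Icc (0:ℝ) 1, |deriv z x - deriv z x₀| ≤ r₂ * Real.sqrt |x - x₀| := by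
    intro x hx
    rcases le_total x x₀ with h | h
    · have h1 : |x - x₀| = x₀ - x := by rw [abs_sub_comm]; exact abs_of_nonneg (by linarith)
      rw [h1, abs_sub_comm]
      exact holder_aux z hz r₂ hr₂ hWsq hx.1 hx₀.2 h
    · have h1 : |x - x₀| = x - x₀ := abs_of_nonneg (by linarith)
      rw [h1]
      exact holder_aux z hz r₂ hr₂ hWsq hx₀.1 hx.2 h
  -- constants
  set a := m^2/r₂^2 with hadef
  have ha0 : 0 < a := by positivity
  have hcT : c < r₂ * Real.sqrt T := by
    have h1 : Real.exp (-(2*r₁*r₂^2+1)) < 1 := by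
      rw [Real.exp_lt_one_iff]; nlinarith
    rw [hcdef]
    exact mul_lt_of_lt_one_right (by positivity) h1
  have hmT : m < r₂ * Real.sqrt T := hcon.trans hcT
  have haT : a < T := by
    have h2 : m^2 < r₂^2 * T := by nlinarith [Real.sq_sqrt hT0.le]
    rw [hadef, div_lt_iff₀ (by positivity)]
    linarith
  have hra : r₂ * Real.sqrt a = m := by
    rw [hadef, show m^2/r₂^2 = (m/r₂)^2 by ring, Real.sqrt_sq (by positivity)]
    field_simp
  -- pointwise lower bound for 1/|z'|^q
  have hpoint : ∀ x ∈ Icc (0:ℝ) 1, a ≤ |x - x₀| → |x - x₀| ≤ T →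
      1/(4*r₂^2*|x - x₀|) ≤ 1/|deriv z x|^q := by
    intro x hx h1 h2
    have hb0 : 0 < |deriv z x| := abs_pos.mpr (hz' x hx)
    have hsd : Real.sqrt a ≤ Real.sqrt |x-x₀| := Real.sqrt_le_sqrt h1
    have hsd0 : 0 < Real.sqrt |x-x₀| := lt_of_lt_of_le (Real.sqrt_pos.mpr ha0) hsd
    have hup : |deriv z x| ≤ 2*r₂*Real.sqrt |x-x₀| := by
      have h3 := hHol x hx
      have h4 : m ≤ r₂ * Real.sqrt |x-x₀| := by
        rw [← hra]; nlinarith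
      calc |deriv z x| = |(deriv z x - deriv z x₀) + deriv z x₀| := by ring_nf
        _ ≤ |deriv z x - deriv z x₀| + |deriv z x₀| := abs_add_le _ _
        _ ≤ r₂ * Real.sqrt |x-x₀| + m := by rw [← hmdef]; linarith
        _ ≤ 2*r₂*Real.sqrt |x-x₀| := by linarith
    have hle1 : |deriv z x| ≤ 1 := by
      have h5 : Real.sqrt |x-x₀| ≤ Real.sqrt T := Real.sqrt_le_sqrt h2
      have h6 : Real.sqrt T ≤ 1/(2*r₂) := by
        calc Real.sqrt T ≤ Real.sqrt ((1/(2*r₂))^2) := by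
              apply Real.sqrt_le_sqrt
              rw [show (1/(2*r₂))^2 = 1/(4*r₂^2) by ring]
              exact hT4
          _ = 1/(2*r₂) := Real.sqrt_sq (by positivity)
      calc |deriv z x| ≤ 2*r₂*Real.sqrt |x-x₀| := hup
        _ ≤ 2*r₂*(1/(2*r₂)) := by nlinarith
        _ = 1 := by field_simp
    have hq2 : |deriv z x|^q ≤ |deriv z x|^(2:ℝ) :=
      Real.rpow_le_rpow_of_exponent_ge hb0 hle1 hq
    have hcast : |deriv z x|^(2:ℝ) = |deriv z x| * |deriv z x| := by
      rw [show (2:ℝ) = ((2:ℕ):ℝ) by norm_num, Real.rpow_natCast]; ring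
    have hbound : |deriv z x|^q ≤ 4*r₂^2*|x-x₀| := by
      have h7 : |deriv z x| * |deriv z x| ≤ 4*r₂^2*|x-x₀| := by
        have h8 : |deriv z x| * |deriv z x| ≤ (2*r₂*Real.sqrt |x-x₀|) * (2*r₂*Real.sqrt |x-x₀|) :=
          mul_le_mul hup hup (abs_nonneg _) (by positivity)
        have h9 : Real.sqrt |x-x₀| * Real.sqrt |x-x₀| = |x-x₀| :=
          Real.mul_self_sqrt (abs_nonneg _)
        nlinarith [h8, h9]
      calc |deriv z x|^q ≤ |deriv z x|^(2:ℝ) := hq2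
        _ = |deriv z x| * |deriv z x| := hcast
        _ ≤ 4*r₂^2*|x-x₀| := h7
    exact one_div_le_one_div_of_le (Real.rpow_pos_of_pos hb0 q) hbound
  -- integrability and nonnegativity of 1/|z'|^q
  have hInt : IntervalIntegrable (fun x => 1/|deriv z x|^q) volume 0 1 := by
    apply ContinuousOn.intervalIntegrable
    rw [uIcc_of_le (by norm_num : (0:ℝ) ≤ 1)]
    apply ContinuousOn.div continuousOn_const
    · exact ContinuousOn.rpow_const (hz'c.abs.continuousOn)
        (fun x hx => Or.inl (abs_ne_zero.mpr (hz' x hx)))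
    · intro x hx
      exact ne_of_gt (Real.rpow_pos_of_pos (abs_pos.mpr (hz' x hx)) q)
  have hnn : ∀ s, (0:ℝ) ≤ 1/|deriv z s|^q := fun s => by positivity
  -- the key integral lower bound
  have hkey : (Real.log T - Real.log a)/(4*r₂^2) ≤ r₁ := by
    rcases le_total x₀ (1/2) with hhalf | hhalf
    · -- interval to the right of x₀
      have h0u : (0:ℝ) ≤ x₀ + a := by linarith [hx₀.1]
      have huv : x₀ + a ≤ x₀ + T := by linarith
      have hv1 : x₀ + T ≤ 1 := by linarith
      have step1 : (∫ x in (x₀+a)..(x₀+T), 1/|deriv z x|^q)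
          ≤ ∫ x in (0:ℝ)..1, 1/|deriv z x|^q :=
        intervalIntegral.integral_mono_interval h0u huv hv1
          (Filter.Eventually.of_forall fun s => hnn s) hInt
      have hgint : IntervalIntegrable (fun x => 1/(4*r₂^2*(x-x₀))) volume (x₀+a) (x₀+T) := by
        apply ContinuousOn.intervalIntegrable
        apply continuousOn_const.div
          (continuousOn_const.mul (continuousOn_id.sub continuousOn_const))
        intro x hx
        rw [uIcc_of_le huv] at hx
        have : 0 < x - x₀ := by have := hx.1; linarith
        exact (mul_pos (by positivity) this).ne'
      have step2 : (∫ x in (x₀+a)..(x₀+T), 1/(4*r₂^2*(x-x₀)))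
          ≤ ∫ x in (x₀+a)..(x₀+T), 1/|deriv z x|^q := by
        have hss : uIcc (x₀+a) (x₀+T) ⊆ uIcc (0:ℝ) 1 := by
          rw [uIcc_of_le huv, uIcc_of_le (by norm_num : (0:ℝ) ≤ 1)]
          exact Icc_subset_Icc h0u hv1
        apply intervalIntegral.integral_mono_on huv hgint (hInt.mono_set hss)
        intro x hx
        have hd : |x - x₀| = x - x₀ := abs_of_nonneg (by have := hx.1; linarith)
        have := hpoint x ⟨by have := hx.1; linarith, by have := hx.2; linarith⟩
          (by rw [hd]; have := hx.1; linarith) (by rw [hd]; have := hx.2; linarith)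
        rw [hd] at this
        exact this
      have step3 := integral_inv_left x₀ a T (4*r₂^2) (by positivity) ha0 haT.le
      rw [← step3]
      exact le_trans step2 (le_trans step1 hI)
    · -- interval to the left of x₀
      have h0u : (0:ℝ) ≤ x₀ - T := by linarith
      have huv : x₀ - T ≤ x₀ - a := by linarith
      have hv1 : x₀ - a ≤ 1 := by linarith [hx₀.2]
      have step1 : (∫ x in (x₀-T)..(x₀-a), 1/|deriv z x|^q)
          ≤ ∫ x in (0:ℝ)..1, 1/|deriv z x|^q :=
        intervalIntegral.integral_mono_interval h0u huv hv1
          (Filter.Eventually.of_forall fun s => hnn s) hInt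
      have hgint : IntervalIntegrable (fun x => 1/(4*r₂^2*(x₀-x))) volume (x₀-T) (x₀-a) := by
        apply ContinuousOn.intervalIntegrable
        apply continuousOn_const.div
          (continuousOn_const.mul (continuousOn_const.sub continuousOn_id))
        intro x hx
        rw [uIcc_of_le huv] at hx
        have : 0 < x₀ - x := by have := hx.2; linarith
        exact (mul_pos (by positivity) this).ne'
      have step2 : (∫ x in (x₀-T)..(x₀-a), 1/(4*r₂^2*(x₀-x)))
          ≤ ∫ x in (x₀-T)..(x₀-a), 1/|deriv z x|^q := by
        have hss : uIcc (x₀-T) (x₀-a) ⊆ uIcc (0:ℝ) 1 := by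
          rw [uIcc_of_le huv, uIcc_of_le (by norm_num : (0:ℝ) ≤ 1)]
          exact Icc_subset_Icc h0u hv1
        apply intervalIntegral.integral_mono_on huv hgint (hInt.mono_set hss)
        intro x hx
        have hd : |x - x₀| = x₀ - x := by
          rw [abs_sub_comm]; exact abs_of_nonneg (by have := hx.2; linarith)
        have := hpoint x ⟨by have := hx.1; linarith, by have := hx.2; linarith⟩
          (by rw [hd]; have := hx.2; linarith) (by rw [hd]; have := hx.1; linarith)
        rw [hd] at this
        exact this
      have step3 := integral_inv_right x₀ a T (4*r₂^2) (by positivity) ha0 haT.le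
      rw [← step3]
      exact le_trans step2 (le_trans step1 hI)
  -- final contradiction via logarithms
  have hlogm : Real.log m < Real.log c := Real.log_lt_log hm0 hcon
  have hlogc : Real.log c = Real.log r₂ + Real.log T / 2 + (-(2*r₁*r₂^2+1)) := by
    rw [hcdef, Real.log_mul (by positivity) (Real.exp_ne_zero _),
      Real.log_mul hr₂.ne' hsT.ne', Real.log_exp, Real.log_sqrt hT0.le]
  have hloga : Real.log a = 2*Real.log m - 2*Real.log r₂ := by
    rw [hadef, Real.log_div (by positivity) (by positivity), Real.log_pow, Real.log_pow]
    push_cast; ring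
  have hfinal : 4*r₁*r₂^2 + 2 < Real.log T - Real.log a := by
    rw [hloga]; rw [hlogc] at hlogm; linarith
  rw [div_le_iff₀ (by positivity)] at hkey
  nlinarith
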